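/- Let K be a perfectoid field and ϖ ∈ K^× with |p| ≤ |ϖ| < 1. Then the natural projection map from the multiplicative monoid lim_{x ↦ x^p} K° (inverse limit along the p-power map) to lim_Φ K°/ϖ (inverse limit along the Frobenius Φ on K°/ϖ) is a bijection. -/

import Mathlib

/-- A perfectoid field, encoded via a rank-1 valuation `Valued K NNReal` plus completeness. -/
def IsPerfectoidField (K : Type*) [Field K] [Valued K NNReal] (p : ℕ) : Prop :=
  (¬ ∃ γ : NNReal, ∀ x : K, x ≠ 0 → ∃ n : ℤ, Valued.v x = γ ^ n) ∧
  Valued.v (p : K) < 1 ∧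
  (∀ x : K, Valued.v x ≤ 1 → ∃ y : K, Valued.v y ≤ 1 ∧ Valued.v (x - y ^ p) ≤ Valued.v (p : K))

section Aux

variable {K : Type*} [Field K] [Valued K NNReal]

lemma aux_nat_val_le_one (m : ℕ) : Valued.v (m : K) ≤ 1 := by
  induction m with
  | zero => simp
  | succ n ih =>
    push_cast
    exact le_trans (Valued.v.map_add _ _) (max_le ih (by simp))

/-- Key estimate: if `a ≡ b mod ϖ` then `v (a^p - b^p) ≤ v ϖ * v (a - b)`. -/
lemma aux_pow_p_est {p : ℕ} (hp : p.Prime) {ϖ a b : K}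
    (hpϖ : Valued.v (p : K) ≤ Valued.v ϖ)
    (hb : Valued.v b ≤ 1) (hab : Valued.v (a - b) ≤ Valued.v ϖ)
    (hϖ1 : Valued.v ϖ ≤ 1) :
    Valued.v (a ^ p - b ^ p) ≤ Valued.v ϖ * Valued.v (a - b) := by
  have hc1 : Valued.v (a - b) ≤ 1 := hab.trans hϖ1
  have key : a ^ p - b ^ p =
      ∑ i ∈ Finset.range p, b ^ i * (a - b) ^ (p - i) * (p.choose i : K) := by
    have h := add_pow b (a - b) p
    rw [add_sub_cancel] at h
    rw [h, Finset.sum_range_succ]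
    simp
  rw [key]
  apply Valuation.map_sum_le
  intro i hi
  rw [Finset.mem_range] at hi
  rw [map_mul, map_mul, map_pow, map_pow]
  rcases eq_or_ne i 0 with rfl | hi0
  · simp only [pow_zero, Nat.choose_zero_right, Nat.cast_one, map_one, one_mul, mul_one,
      Nat.sub_zero]
    calc Valued.v (a - b) ^ p ≤ Valued.v (a - b) ^ 2 :=
          pow_le_pow_right_of_le_one' hc1 hp.two_le
      _ = Valued.v (a - b) * Valued.v (a - b) := sq _
      _ ≤ Valued.v ϖ * Valued.v (a - b) := mul_le_mul_left hab _
  · obtain ⟨m, hm⟩ := hp.dvd_choose_self hi0 hi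
    have hC : Valued.v ((p.choose i : ℕ) : K) ≤ Valued.v ϖ := by
      rw [hm]
      push_cast
      rw [map_mul]
      calc Valued.v ((p : K)) * Valued.v ((m : K)) ≤ Valued.v ϖ * 1 :=
            mul_le_mul' hpϖ (aux_nat_val_le_one m)
        _ = Valued.v ϖ := mul_one _
    have hcr : Valued.v (a - b) ^ (p - i) ≤ Valued.v (a - b) := by
      calc Valued.v (a - b) ^ (p - i) ≤ Valued.v (a - b) ^ 1 :=
            pow_le_pow_right_of_le_one' hc1 (by omega)
        _ = _ := pow_one _
    calc Valued.v b ^ i * Valued.v (a - b) ^ (p - i) * Valued.v ((p.choose i : ℕ) : K)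
        ≤ 1 * Valued.v (a - b) * Valued.v ϖ :=
          mul_le_mul' (mul_le_mul' (pow_le_one' hb i) hcr) hC
      _ = Valued.v ϖ * Valued.v (a - b) := by ring

/-- Iterated estimate. -/
lemma aux_pow_pm_est {p : ℕ} (hp : p.Prime) {ϖ : K}
    (hpϖ : Valued.v (p : K) ≤ Valued.v ϖ) (hϖ1 : Valued.v ϖ ≤ 1) (m : ℕ) :
    ∀ {a b : K}, Valued.v a ≤ 1 → Valued.v b ≤ 1 → Valued.v (a - b) ≤ Valued.v ϖ →
    Valued.v (a ^ p ^ m - b ^ p ^ m) ≤ Valued.v ϖ ^ m * Valued.v (a - b) := by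
  induction m with
  | zero => intro a b _ _ _; simp
  | succ n ih =>
    intro a b ha hb hab
    have h2 : Valued.v (a ^ p - b ^ p) ≤ Valued.v ϖ * Valued.v (a - b) :=
      aux_pow_p_est hp hpϖ hb hab hϖ1
    have h3 : Valued.v (a ^ p - b ^ p) ≤ Valued.v ϖ :=
      h2.trans (by calc Valued.v ϖ * Valued.v (a - b) ≤ Valued.v ϖ * 1 :=
                      mul_le_mul_right (hab.trans hϖ1) _
                    _ = _ := mul_one _)
    have ha' : Valued.v (a ^ p) ≤ 1 := by rw [map_pow]; exact pow_le_one' ha p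
    have hb' : Valued.v (b ^ p) ≤ 1 := by rw [map_pow]; exact pow_le_one' hb p
    calc Valued.v (a ^ p ^ (n + 1) - b ^ p ^ (n + 1))
        = Valued.v ((a ^ p) ^ p ^ n - (b ^ p) ^ p ^ n) := by
          rw [pow_succ', pow_mul, pow_mul]
      _ ≤ Valued.v ϖ ^ n * Valued.v (a ^ p - b ^ p) := ih ha' hb' h3
      _ ≤ Valued.v ϖ ^ n * (Valued.v ϖ * Valued.v (a - b)) := mul_le_mul_right h2 _
      _ = Valued.v ϖ ^ (n + 1) * Valued.v (a - b) := by ring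

/-- Membership in the span of `ϖ` in the integer ring is a valuation condition. -/
lemma aux_mem_span_iff {ϖ : K} (hϖ0 : ϖ ≠ 0) (hϖ1 : Valued.v ϖ ≤ 1)
    (a : (Valued.v : Valuation K NNReal).integer) :
    a ∈ Ideal.span {(⟨ϖ, hϖ1⟩ : (Valued.v : Valuation K NNReal).integer)} ↔
      Valued.v (a : K) ≤ Valued.v ϖ := by
  rw [Ideal.mem_span_singleton]
  constructor
  · rintro ⟨c, rfl⟩
    push_cast
    rw [map_mul]
    calc Valued.v ϖ * Valued.v (c : K) ≤ Valued.v ϖ * 1 := mul_le_mul_right c.2 _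
      _ = _ := mul_one _
  · intro h
    have hvϖ : Valued.v ϖ ≠ 0 := by
      simpa using hϖ0
    refine ⟨⟨(a : K) / ϖ, ?_⟩, ?_⟩
    · rw [Valuation.mem_integer_iff, map_div₀]
      exact div_le_one_of_le₀ h zero_le
    · apply Subtype.ext
      push_cast
      field_simp
end Aux

section Aux2
variable {K : Type*} [Field K] [Valued K NNReal]

lemma aux_isClosed_ball (r : NNReal) : IsClosed {x : K | Valued.v x ≤ r} := by
  rw [← isOpen_compl_iff, isOpen_iff_mem_nhds]
  intro x hx
  rw [Set.mem_compl_iff, Set.mem_setOf_eq, not_le] at hx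
  have hx0 : Valued.v x ≠ 0 := (lt_of_le_of_lt zero_le hx).ne'
  rw [Valued.mem_nhds]
  have hx0' : Valued.v.restrict x ≠ 0 :=
    fun h => hx0 (Valued.v.restrict_eq_zero_iff.mp h)
  refine ⟨Units.mk0 _ hx0', fun y hy => ?_⟩
  rw [Set.mem_setOf_eq, Units.val_mk0] at hy
  rw [Set.mem_compl_iff, Set.mem_setOf_eq, not_le,
    Valuation.map_eq_of_sub_lt _ (Valued.v.restrict_lt_iff.mp hy)]
  exact hx

/-- every coordinatewise-compatible power sequence satisfies `f n = f (n+m) ^ p ^ m`. -/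
lemma aux_iterate {p : ℕ}
    (f : {f : ℕ → ((Valued.v : Valuation K NNReal).integer) // ∀ n, f (n + 1) ^ p = f n})
    (n m : ℕ) : ((f.1 (n + m) : K)) ^ p ^ m = (f.1 n : K) := by
  induction m with
  | zero => simp
  | succ k ih =>
    have h1 : ((f.1 (n + k + 1) : K)) ^ p = (f.1 (n + k) : K) := by
      rw [← SubmonoidClass.coe_pow, f.2 (n + k)]
    calc ((f.1 (n + (k + 1)) : K)) ^ p ^ (k + 1)
        = (((f.1 (n + k + 1) : K)) ^ p) ^ p ^ k := by
          rw [show n + (k + 1) = n + k + 1 from rfl, pow_succ', pow_mul]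
      _ = ((f.1 (n + k) : K)) ^ p ^ k := by rw [h1]
      _ = _ := ih

end Aux2


/-- For a perfectoid field `K` and `ϖ ∈ K^×` with `|p| ≤ |ϖ| < 1`, the natural
projection from `lim_{x ↦ x^p} K°` (sequences in `K°` with `x_{n+1}^p = x_n`) to
`lim_Φ K°/ϖ` (sequences in `K°/ϖ` with `x̄_{n+1}^p = x̄_n`), given by reduction
mod `ϖ` in each coordinate, is a bijection. -/
theorem tilt_projection_bijective (K : Type*) [Field K] [Valued K NNReal] [CompleteSpace K]
    (p : ℕ) (hp : p.Prime) (hK : IsPerfectoidField K p)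
    (ϖ : K) (hϖ0 : ϖ ≠ 0) (hϖp : Valued.v (p : K) ≤ Valued.v ϖ) (hϖ1 : Valued.v ϖ < 1) :
    Function.Bijective
      (fun x : {f : ℕ → ((Valued.v : Valuation K NNReal).integer) // ∀ n, f (n + 1) ^ p = f n} =>
        (⟨fun n => Ideal.Quotient.mk
            (Ideal.span {(⟨ϖ, le_of_lt hϖ1⟩ : (Valued.v : Valuation K NNReal).integer)}) (x.1 n),
          fun n => by rw [← map_pow, x.2 n]⟩ :
          {g : ℕ → ((Valued.v : Valuation K NNReal).integer ⧸
              Ideal.span {(⟨ϖ, le_of_lt hϖ1⟩ : (Valued.v : Valuation K NNReal).integer)}) //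
            ∀ n, g (n + 1) ^ p = g n})) := by
  have hϖ1' : Valued.v ϖ ≤ 1 := le_of_lt hϖ1
  constructor
  · -- injectivity
    intro x x' h
    have hcoord : ∀ n, (Ideal.Quotient.mk _ (x.1 n) : _) = Ideal.Quotient.mk _ (x'.1 n) :=
      fun n => congrFun (congrArg Subtype.val h) n
    have hd : ∀ n, Valued.v ((x.1 n : K) - (x'.1 n : K)) ≤ Valued.v ϖ := by
      intro n
      have := (aux_mem_span_iff hϖ0 hϖ1' _).mp ((Ideal.Quotient.eq).mp (hcoord n))
      simpa using this
    refine Subtype.ext (funext fun n => Subtype.ext ?_)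
    have hzero : Valued.v ((x.1 n : K) - (x'.1 n : K)) = 0 := by
      refine le_antisymm ?_ zero_le
      refine ge_of_tendsto' (NNReal.tendsto_pow_atTop_nhds_zero_of_lt_one hϖ1) fun m => ?_
      rw [← aux_iterate x n m, ← aux_iterate x' n m]
      calc Valued.v ((x.1 (n + m) : K) ^ p ^ m - (x'.1 (n + m) : K) ^ p ^ m)
          ≤ Valued.v ϖ ^ m * Valued.v ((x.1 (n + m) : K) - (x'.1 (n + m) : K)) :=
            aux_pow_pm_est hp hϖp hϖ1' m (x.1 (n + m)).2 (x'.1 (n + m)).2 (hd (n + m))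
        _ ≤ Valued.v ϖ ^ m * 1 := mul_le_mul_right ((hd (n + m)).trans hϖ1') _
        _ = Valued.v ϖ ^ m := mul_one _
    exact sub_eq_zero.mp ((Valuation.zero_iff _).mp hzero)
  · -- surjectivity
    intro g
    choose y hy using fun n => Ideal.Quotient.mk_surjective (g.1 n)
    -- the lifts are compatible modulo ϖ
    have hcong : ∀ n, Valued.v ((y (n + 1) : K) ^ p - (y n : K)) ≤ Valued.v ϖ := by
      intro n
      have h1 : (Ideal.Quotient.mk
            (Ideal.span {(⟨ϖ, le_of_lt hϖ1⟩ : (Valued.v : Valuation K NNReal).integer)})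
            (y (n + 1) ^ p)) = Ideal.Quotient.mk _ (y n) := by
        rw [map_pow, hy, hy]
        exact g.2 n
      have := (aux_mem_span_iff hϖ0 hϖ1' _).mp ((Ideal.Quotient.eq).mp h1)
      simpa using this
    -- the approximating sequences
    obtain ⟨u, hu⟩ : ∃ u : ℕ → ℕ → K, ∀ n m, u n m = (y (n + m) : K) ^ p ^ m :=
      ⟨_, fun _ _ => rfl⟩
    have humem : ∀ n m, Valued.v (u n m) ≤ 1 := fun n m => by
      rw [hu, map_pow]; exact pow_le_one' (y (n + m)).2 _
    have hstep : ∀ n m, Valued.v (u n (m + 1) - u n m) ≤ Valued.v ϖ ^ (m + 1) := by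
      intro n m
      have h1 : u n (m + 1) = ((y (n + m + 1) : K) ^ p) ^ p ^ m := by
        rw [hu, show n + (m + 1) = n + m + 1 from rfl, pow_succ', pow_mul]
      have h2 : Valued.v ((y (n + m + 1) : K) ^ p) ≤ 1 := by
        rw [map_pow]; exact pow_le_one' (y (n + m + 1)).2 _
      calc Valued.v (u n (m + 1) - u n m)
          = Valued.v (((y (n + m + 1) : K) ^ p) ^ p ^ m - ((y (n + m) : K)) ^ p ^ m) := by
            rw [h1, hu]
        _ ≤ Valued.v ϖ ^ m * Valued.v ((y (n + m + 1) : K) ^ p - (y (n + m) : K)) :=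
            aux_pow_pm_est hp hϖp hϖ1' m h2 (y (n + m)).2 (hcong (n + m))
        _ ≤ Valued.v ϖ ^ m * Valued.v ϖ := mul_le_mul_right (hcong (n + m)) _
        _ = Valued.v ϖ ^ (m + 1) := (pow_succ _ _).symm
    have htel : ∀ n m k, Valued.v (u n (m + k) - u n m) ≤ Valued.v ϖ ^ (m + 1) := by
      intro n m k
      induction k with
      | zero => simp
      | succ j ih =>
        have heq : u n (m + (j + 1)) - u n m =
            (u n ((m + j) + 1) - u n (m + j)) + (u n (m + j) - u n m) := by
          rw [show m + (j + 1) = (m + j) + 1 from rfl]; ring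
        rw [heq]
        refine le_trans (Valued.v.map_add _ _) (max_le (le_trans (hstep n (m + j)) ?_) ih)
        exact pow_le_pow_right_of_le_one' hϖ1' (by omega)
    -- each u n is Cauchy
    have hcauchy : ∀ n, CauchySeq (u n) := by
      intro n
      rw [(Valued.hasBasis_uniformity K NNReal).cauchySeq_iff]
      rintro γ -
      obtain ⟨N, hN⟩ := exists_pow_lt_of_lt_one (pos_iff_ne_zero.mpr (fun h => γ.ne_zero
        (MonoidWithZeroHom.ValueGroup₀.embedding_injective (h.trans (map_zero _).symm)))) hϖ1
      refine ⟨N, fun i hi j hj => ?_⟩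
      rw [Set.mem_setOf_eq]
      have h1 : Valued.v (u n j - u n i) ≤ Valued.v ϖ ^ (N + 1) := by
        have hi' : u n i - u n N = u n (N + (i - N)) - u n N := by rw [Nat.add_sub_cancel' hi]
        have hj' : u n j - u n N = u n (N + (j - N)) - u n N := by rw [Nat.add_sub_cancel' hj]
        have heq : u n j - u n i = (u n j - u n N) - (u n i - u n N) := by ring
        rw [heq, hi', hj']
        exact le_trans (Valued.v.map_sub _ _) (max_le (htel n N _) (htel n N _))
      exact (Valued.v.restrict_lt_iff_lt_embedding).mpr
        (lt_of_le_of_lt (h1.trans (pow_le_pow_right_of_le_one' hϖ1' (by omega))) hN)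
    -- limits
    choose x hx using fun n => cauchySeq_tendsto_of_complete (hcauchy n)
    have hxmem : ∀ n, Valued.v (x n) ≤ 1 := fun n =>
      (aux_isClosed_ball (K := K) 1).mem_of_tendsto (hx n)
        (Filter.Eventually.of_forall fun m => humem n m)
    have hxy : ∀ n, Valued.v (x n - (y n : K)) ≤ Valued.v ϖ := by
      intro n
      have hcl : IsClosed {z : K | Valued.v (z - (y n : K)) ≤ Valued.v ϖ} :=
        (aux_isClosed_ball (K := K) (Valued.v ϖ)).preimage (continuous_sub_right _)
      refine hcl.mem_of_tendsto (hx n) (Filter.Eventually.of_forall fun m => ?_)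
      rw [Set.mem_setOf_eq]
      have h0 : u n 0 = (y n : K) := by rw [hu]; simp
      have h1 := htel n 0 m
      rw [h0, zero_add] at h1
      simpa using h1
    have hcompat : ∀ n, (x (n + 1)) ^ p = x n := by
      intro n
      have h1 : Filter.Tendsto (fun m => (u (n + 1) m) ^ p) Filter.atTop
          (nhds ((x (n + 1)) ^ p)) := (hx (n + 1)).pow p
      have h2 : (fun m => (u (n + 1) m) ^ p) = fun m => u n (m + 1) := by
        funext m
        rw [hu, hu, ← pow_mul, ← pow_succ, show n + 1 + m = n + (m + 1) by omega]
      rw [h2] at h1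
      have h3 : Filter.Tendsto (fun m => u n (m + 1)) Filter.atTop (nhds (x n)) :=
        (hx n).comp (Filter.tendsto_add_atTop_nat 1)
      exact tendsto_nhds_unique h1 h3
    refine ⟨⟨fun n => ⟨x n, hxmem n⟩, fun n => Subtype.ext ?_⟩, ?_⟩
    · push_cast
      exact_mod_cast hcompat n
    · refine Subtype.ext (funext fun n => ?_)
      simp only
      rw [← hy n, Ideal.Quotient.eq, aux_mem_span_iff hϖ0 hϖ1']
      simpa using hxy n
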